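/- Let h ≥ 0 and r ≥ 0 be integers and m_1, …, m_r integers with m_i ≥ 2 for all i. If 0 < μ(h; m_1,…,m_r) < 1/15, then h = 0, r = 3, and the multiset {m_1, m_2, m_3} is one of {2,3,7}, {2,3,8}, {2,4,5}, {2,3,9}. -/

import Mathlib

lemma inv_cast_le' {k x : ℕ} (hk : 0 < k) (h : k ≤ x) : (x:ℚ)⁻¹ ≤ (k:ℚ)⁻¹ :=
  inv_anti₀ (by exact_mod_cast hk) (by exact_mod_cast h)

lemma inv_cast_pos' {x : ℕ} (hx : 0 < x) : (0:ℚ) < (x:ℚ)⁻¹ := by positivity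

lemma pair_le' (b c : ℕ) (hb : 2 ≤ b) (hc : 2 ≤ c)
    (h : (b:ℚ)⁻¹ + (c:ℚ)⁻¹ < 1) : (b:ℚ)⁻¹ + (c:ℚ)⁻¹ ≤ 5/6 := by
  rcases le_or_gt 3 b with h3 | h3
  · have := inv_cast_le' (k := 3) (by norm_num) h3
    have := inv_cast_le' (k := 2) (by norm_num) hc
    norm_num at *; linarith
  · have hb2 : b = 2 := by omega
    rcases le_or_gt 3 c with h4 | h4
    · have := inv_cast_le' (k := 3) (by norm_num) h4
      subst hb2; norm_num at *; linarith
    · have hc2 : c = 2 := by omega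
      subst hb2; subst hc2; norm_num at h

lemma bound9' (a b c : ℕ) (ha : 2 ≤ a) (hb : 2 ≤ b) (hc : 2 ≤ c)
    (hgt : 14/15 < (a:ℚ)⁻¹ + (b:ℚ)⁻¹ + (c:ℚ)⁻¹)
    (hlt : (a:ℚ)⁻¹ + (b:ℚ)⁻¹ + (c:ℚ)⁻¹ < 1) : a ≤ 9 := by
  have hpos := inv_cast_pos' (x := a) (by omega)
  have hp := pair_le' b c hb hc (by linarith)
  by_contra hcon
  have h10 : 10 ≤ a := by omega
  have := inv_cast_le' (k := 10) (by norm_num) h10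
  norm_num at this; linarith

lemma key' (a b c : ℕ) (ha : 2 ≤ a) (hb : 2 ≤ b) (hc : 2 ≤ c)
    (hgt : 14/15 < (a:ℚ)⁻¹ + (b:ℚ)⁻¹ + (c:ℚ)⁻¹)
    (hlt : (a:ℚ)⁻¹ + (b:ℚ)⁻¹ + (c:ℚ)⁻¹ < 1) :
    ({a, b, c} : Multiset ℕ) = {2,3,7} ∨ ({a, b, c} : Multiset ℕ) = {2,3,8} ∨
    ({a, b, c} : Multiset ℕ) = {2,4,5} ∨ ({a, b, c} : Multiset ℕ) = {2,3,9} := by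
  have ha9 : a ≤ 9 := bound9' a b c ha hb hc hgt hlt
  have hb9 : b ≤ 9 := bound9' b a c hb ha hc (by linarith) (by linarith)
  have hc9 : c ≤ 9 := bound9' c a b hc ha hb (by linarith) (by linarith)
  interval_cases a <;> interval_cases b <;> interval_cases c <;>
    first | decide | (norm_num at hgt; done) | (norm_num at hlt; done)

lemma eq_two' (x : ℕ) (hx : 2 ≤ x) (h : 13/30 < (x:ℚ)⁻¹) : x = 2 := by
  by_contra hc
  have := inv_cast_le' (k := 3) (by norm_num) (by omega : 3 ≤ x)
  norm_num at this; linarith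

/-- The signature measure `μ(h; m₁,…,m_r) = 2h - 2 + ∑ᵢ (1 - 1/mᵢ)`. -/
def mu (h r : ℕ) (m : Fin r → ℕ) : ℚ :=
  2 * h - 2 + ∑ i, (1 - ((m i : ℚ))⁻¹)

/-- If `0 < μ(h; m₁,…,m_r) < 1/15`, then `h = 0`, `r = 3`, and the multiset of
periods is one of `{2,3,7}`, `{2,3,8}`, `{2,4,5}`, `{2,3,9}`. -/
theorem mu_lt_one_fifteenth (h r : ℕ) (m : Fin r → ℕ)
    (hm : ∀ i, 2 ≤ m i) (h0 : 0 < mu h r m) (h1 : mu h r m < 1 / 15) :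
    h = 0 ∧ r = 3 ∧
      (Multiset.map m Finset.univ.val = ({2, 3, 7} : Multiset ℕ) ∨
       Multiset.map m Finset.univ.val = ({2, 3, 8} : Multiset ℕ) ∨
       Multiset.map m Finset.univ.val = ({2, 4, 5} : Multiset ℕ) ∨
       Multiset.map m Finset.univ.val = ({2, 3, 9} : Multiset ℕ)) := by
  unfold mu at h0 h1
  set S := ∑ i, (1 - ((m i : ℚ))⁻¹) with hSdef
  have hS1 : (r:ℚ)/2 ≤ S := by
    have : ∑ _i : Fin r, (1/2 : ℚ) ≤ S := by
      apply Finset.sum_le_sum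
      intro i _
      have := inv_cast_le' (k := 2) (by norm_num) (hm i)
      norm_num at this ⊢; linarith
    simpa [div_eq_mul_inv] using this
  have hh : h = 0 := by
    by_contra hcon
    have hcast : (1:ℚ) ≤ h := by exact_mod_cast (by omega : 1 ≤ h)
    rcases Nat.eq_zero_or_pos r with hr0 | hrpos
    · subst hr0
      have hS0 : S = 0 := by simp [hSdef]
      have hq : (h:ℚ) < 31/30 := by rw [hS0] at h1; linarith
      have hle : h < 2 := by exact_mod_cast (by linarith : (h:ℚ) < 2)
      have : h = 1 := by omega
      subst this
      rw [hS0] at h0; norm_num at h0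
    · have : (1:ℚ) ≤ r := by exact_mod_cast hrpos
      linarith
  subst hh
  refine ⟨rfl, ?_⟩
  have hS2 : 2 < S := by push_cast at h0; linarith
  have hS3 : S < 31/15 := by push_cast at h1; linarith
  have hrpos : 0 < r := by
    by_contra hc
    have : r = 0 := by omega
    subst this
    simp [hSdef] at hS2
    linarith
  have hSr : S < r := by
    have : S < ∑ _i : Fin r, (1:ℚ) := by
      apply Finset.sum_lt_sum_of_nonempty
      · exact Finset.univ_nonempty_iff.mpr ⟨⟨0, hrpos⟩⟩
      · intro i _
        have := inv_cast_pos' (x := m i) (by have := hm i; omega)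
        linarith
    simpa using this
  have hr3 : 3 ≤ r := by
    have : (2:ℚ) < r := lt_trans hS2 hSr
    exact_mod_cast this
  have hr5 : r < 5 := by
    have : (r:ℚ) < 5 := by linarith
    exact_mod_cast this
  have hr34 : r = 3 ∨ r = 4 := by omega
  rcases hr34 with hr | hr
  · subst hr
    refine ⟨rfl, ?_⟩
    rw [hSdef, Fin.sum_univ_three] at hS2 hS3
    have ha := hm 0; have hb := hm 1; have hc := hm 2
    have hgt : 14/15 < ((m 0 : ℕ):ℚ)⁻¹ + ((m 1 : ℕ):ℚ)⁻¹ + ((m 2 : ℕ):ℚ)⁻¹ := by linarith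
    have hlt : ((m 0 : ℕ):ℚ)⁻¹ + ((m 1 : ℕ):ℚ)⁻¹ + ((m 2 : ℕ):ℚ)⁻¹ < 1 := by linarith
    have hmap : Multiset.map m Finset.univ.val = ({m 0, m 1, m 2} : Multiset ℕ) := rfl
    rw [hmap]
    exact key' (m 0) (m 1) (m 2) ha hb hc hgt hlt
  · exfalso
    subst hr
    rw [hSdef, Fin.sum_univ_four] at hS2 hS3
    have ha := hm 0; have hb := hm 1; have hc := hm 2; have hd := hm 3
    have i0 := inv_cast_le' (k := 2) (by norm_num) ha
    have i1 := inv_cast_le' (k := 2) (by norm_num) hb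
    have i2 := inv_cast_le' (k := 2) (by norm_num) hc
    have i3 := inv_cast_le' (k := 2) (by norm_num) hd
    norm_num at i0 i1 i2 i3
    have e0 : m 0 = 2 := eq_two' _ ha (by linarith)
    have e1 : m 1 = 2 := eq_two' _ hb (by linarith)
    have e2 : m 2 = 2 := eq_two' _ hc (by linarith)
    have e3 : m 3 = 2 := eq_two' _ hd (by linarith)
    rw [e0, e1, e2, e3] at hS2
    norm_num at hS2
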